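/- For every natural number k, I_{2k+2, 2k+1} = ∫_0^∞ f_{2k+2}(x) f_{2k+1}(x) dx = 0. -/

import Mathlib

open Complex MeasureTheory Filter Set

noncomputable def gg (n : ℕ) (x : ℝ) : ℝ :=
  ((-1 : ℂ) ^ n * n.factorial * ((x : ℂ) - I) ^ (-(n + 1 : ℤ))).im

lemma sub_I_ne (x : ℝ) : (x : ℂ) - I ≠ 0 := by
  intro h
  have := congrArg Complex.im h
  simp at this

lemma gg_hasDerivAt (n : ℕ) (x : ℝ) : HasDerivAt (gg n) (gg (n + 1) x) x := by
  have h0 : HasDerivAt (fun z : ℂ => z - I) 1 (x : ℂ) := (hasDerivAt_id _).sub_const I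
  have h1 := HasDerivAt.comp (x : ℂ)
    (hasDerivAt_zpow (-(n + 1 : ℤ)) ((x : ℂ) - I) (Or.inl (sub_I_ne x))) h0
  have h2 := (h1.const_mul ((-1 : ℂ) ^ n * n.factorial)).comp_ofReal
  have h3 := Complex.imCLM.hasFDerivAt.comp_hasDerivAt x h2
  convert h3 using 1
  show gg (n + 1) x = Complex.imCLM _
  simp only [gg, Complex.imCLM_apply]
  congr 1
  have : (-(↑n + 1 : ℤ) - 1) = (-(↑(n+1) + 1 : ℤ)) := by push_cast; ring
  rw [this, show (((n+1).factorial : ℂ)) = (n+1) * n.factorial by exact_mod_cast Nat.factorial_succ n]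
  push_cast
  ring
  all_goals rfl

lemma iter_eq (f : ℝ → ℝ) (hf : ∀ x : ℝ, f x = 1 / (1 + x ^ 2)) (n : ℕ) :
    iteratedDeriv n f = gg n := by
  induction n with
  | zero =>
    funext x
    rw [iteratedDeriv_zero, hf]
    simp only [gg, pow_zero, Nat.factorial_zero, Nat.cast_one, mul_one, one_mul,
      Nat.cast_zero, zero_add, CharP.cast_eq_zero]
    rw [zpow_neg, zpow_one, Complex.inv_im]
    simp [Complex.normSq_apply]
    ring
  | succ n ih =>
    rw [iteratedDeriv_succ, ih]
    funext x
    exact (gg_hasDerivAt n x).deriv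

lemma norm_sub_I (x : ℝ) : ‖(x : ℂ) - I‖ ^ 2 = 1 + x ^ 2 := by
  rw [Complex.sq_norm, Complex.normSq_apply]
  simp
  ring

lemma one_le_norm_sub_I (x : ℝ) : 1 ≤ ‖(x : ℂ) - I‖ := by
  have h2 : (1:ℝ) ≤ ‖(x : ℂ) - I‖ ^ 2 := by rw [norm_sub_I]; nlinarith
  nlinarith [norm_nonneg ((x:ℂ) - I)]

lemma gg_bound (n : ℕ) (x : ℝ) : |gg n x| ≤ n.factorial * ‖(x : ℂ) - I‖⁻¹ := by
  have h1 : |gg n x| ≤ ‖(-1 : ℂ) ^ n * n.factorial * ((x : ℂ) - I) ^ (-(n + 1 : ℤ))‖ :=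
    Complex.abs_im_le_norm _
  refine h1.trans ?_
  rw [norm_mul, norm_mul, norm_pow, norm_neg, norm_one, one_pow, one_mul, norm_zpow]
  have : ‖(x : ℂ) - I‖ ^ (-(n + 1 : ℤ)) ≤ ‖(x : ℂ) - I‖ ^ (-1 : ℤ) := by
    apply zpow_le_zpow_right₀ (one_le_norm_sub_I x)
    omega
  simp only [Complex.norm_natCast] at *
  calc (n.factorial : ℝ) * ‖(x : ℂ) - I‖ ^ (-(n + 1 : ℤ))
      ≤ (n.factorial : ℝ) * ‖(x : ℂ) - I‖ ^ (-1 : ℤ) := by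
        apply mul_le_mul_of_nonneg_left this (by positivity)
    _ = (n.factorial : ℝ) * ‖(x : ℂ) - I‖⁻¹ := by rw [zpow_neg_one]

lemma gg_zero_odd (k : ℕ) : gg (2 * k + 1) 0 = 0 := by
  simp only [gg]
  have h1 : ((0 : ℝ) : ℂ) - I = -I := by push_cast; ring
  rw [h1]
  have h2 : (-I : ℂ) ^ (-(↑(2 * k + 1) + 1 : ℤ)) = ((-1 : ℂ) ^ (k + 1))⁻¹ := by
    rw [show (-(↑(2 * k + 1) + 1 : ℤ)) = -((2 * k + 2 : ℕ) : ℤ) by push_cast; ring,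
      zpow_neg, zpow_natCast, show 2 * k + 2 = 2 * (k + 1) by ring, pow_mul]
    norm_num
  rw [h2, show ((-1:ℂ)^(k+1))⁻¹ = (-1)^(k+1) by rw [← inv_pow, inv_neg, inv_one]]
  rw [show ((-1:ℂ)^(2*k+1) * (2*k+1).factorial * (-1)^(k+1))
      = (((-1:ℝ)^(2*k+1) * (2*k+1).factorial * (-1)^(k+1) : ℝ) : ℂ) by push_cast; ring]
  exact Complex.ofReal_im _

lemma gg_cont (n : ℕ) : Continuous (gg n) :=
  continuous_iff_continuousAt.2 fun x => (gg_hasDerivAt n x).continuousAt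

theorem stmt_16 (f : ℝ → ℝ) (hf : ∀ x : ℝ, f x = 1 / (1 + x ^ 2)) (k : ℕ) :
    ∫ x in Set.Ioi (0 : ℝ), iteratedDeriv (2 * k + 2) f x * iteratedDeriv (2 * k + 1) f x = 0 := by
  set n := 2 * k + 1 with hn
  have h22 : 2 * k + 2 = n + 1 := by omega
  rw [h22, iter_eq f hf, iter_eq f hf]
  set H : ℝ → ℝ := fun x => gg n x * gg n x / 2 with hH
  have hder : ∀ x ∈ Ici (0:ℝ), HasDerivAt H (gg (n+1) x * gg n x) x := by
    intro x _
    have := ((gg_hasDerivAt n x).mul (gg_hasDerivAt n x)).div_const 2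
    convert this using 1
    · rfl
    · rfl
    · rfl
    ring
  have hint : IntegrableOn (fun x => gg (n+1) x * gg n x) (Ioi (0:ℝ)) := by
    have hi : Integrable (fun x : ℝ =>
        ((n+1).factorial * n.factorial : ℝ) * (1 + x ^ 2)⁻¹) :=
      integrable_inv_one_add_sq.const_mul _
    refine (hi.integrableOn).mono' ?_ ?_
    · exact ((gg_cont (n+1)).mul (gg_cont n)).aestronglyMeasurable.restrict
    · filter_upwards with x
      have b1 := gg_bound (n+1) x
      have b2 := gg_bound n x
      have hnorm : (0:ℝ) < ‖(x : ℂ) - I‖ := lt_of_lt_of_le one_pos (one_le_norm_sub_I x)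
      have key : ‖(x : ℂ) - I‖⁻¹ * ‖(x : ℂ) - I‖⁻¹ = (1 + x ^ 2)⁻¹ := by
        rw [← mul_inv, ← sq, norm_sub_I]
      rw [Real.norm_eq_abs, abs_mul]
      calc |gg (n+1) x| * |gg n x|
          ≤ ((n+1).factorial * ‖(x : ℂ) - I‖⁻¹) * (n.factorial * ‖(x : ℂ) - I‖⁻¹) := by
            apply mul_le_mul b1 b2 (abs_nonneg _) (by positivity)
        _ = ((n+1).factorial * n.factorial : ℝ) * (1 + x ^ 2)⁻¹ := by
            rw [← key]; ring
  have htend : Tendsto H atTop (nhds 0) := by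
    have hg0 : Tendsto (gg n) atTop (nhds 0) := by
      apply squeeze_zero_norm' (a := fun x : ℝ => (n.factorial : ℝ) * x⁻¹)
      · filter_upwards [eventually_ge_atTop (1:ℝ)] with x hx
        refine (gg_bound n x).trans ?_
        have hxpos : (0:ℝ) < x := lt_of_lt_of_le one_pos hx
        have : x ≤ ‖(x : ℂ) - I‖ := by
          calc x = |((x:ℂ) - I).re| := by simp [abs_of_pos hxpos]
          _ ≤ ‖(x : ℂ) - I‖ := Complex.abs_re_le_norm _
        gcongr
      · simpa using tendsto_inv_atTop_zero.const_mul (n.factorial : ℝ)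
    have := (hg0.mul hg0).div_const 2
    simpa [hH] using this
  have := integral_Ioi_of_hasDerivAt_of_tendsto' hder hint htend
  rw [this, hH]
  simp [hn, gg_zero_odd k]
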